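/- arXiv:1804.01267 — 5 statements merged into one kernel-verified Lean document; each statement's English description precedes it below -/
import Mathlib

section
/- Let G be a topological group and α : G → G a contractive automorphism, i.e. a topological group automorphism with α^n(g) → e for every g ∈ G. If G has a nilpotent open subgroup, then G is nilpotent. -/
section Aux

variable {G : Type*} [Group G]

open scoped commutatorElement

/-- Iterated left-normed commutator: `itc g n x = ⁅⁅…⁅g, x 0⁆, x 1⁆…, x (n-1)⁆`. -/
def itc (g : G) : ℕ → (ℕ → G) → G
  | 0, _ => g
  | n + 1, x => ⁅itc g n x, x n⁆

@[simp] lemma itc_zero (g : G) (x : ℕ → G) : itc g 0 x = g := rfl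

@[simp] lemma itc_succ (g : G) (n : ℕ) (x : ℕ → G) :
    itc g (n + 1) x = ⁅itc g n x, x n⁆ := rfl

lemma itc_congr (g : G) (n : ℕ) {x y : ℕ → G} (h : ∀ i < n, x i = y i) :
    itc g n x = itc g n y := by
  induction n with
  | zero => rfl
  | succ n ih =>
    simp [itc_succ, ih fun i hi => h i (Nat.lt_succ_of_lt hi), h n (Nat.lt_succ_self n)]

lemma itc_map {H F : Type*} [Group H] [FunLike F G H] [MonoidHomClass F G H]
    (f : F) (g : G) (n : ℕ) (x : ℕ → G) :
    f (itc g n x) = itc (f g) n (fun i => f (x i)) := by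
  induction n with
  | zero => rfl
  | succ n ih => simp [itc_succ, map_commutatorElement, ih]

lemma itc_mem_lowerCentralSeries (g : G) (n : ℕ) (x : ℕ → G) :
    itc g n x ∈ (⊤ : Subgroup G).lowerCentralSeries n := by
  induction n with
  | zero => trivial
  | succ n ih =>
    rw [itc_succ, Subgroup.lowerCentralSeries_succ]
    exact Subgroup.subset_closure
      ⟨itc g n x, ih, x n, trivial, (commutatorElement_def _ _).symm⟩

lemma itc_shift (g : G) (n : ℕ) (x : ℕ → G) :
    itc ⁅g, x 0⁆ n (fun i => x (i + 1)) = itc g (n + 1) x := by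
  induction n with
  | zero => rfl
  | succ n ih => simp [itc_succ, ih]

lemma mem_upperCentralSeries_of_itc (n : ℕ) (g : G)
    (h : ∀ x : ℕ → G, itc g n x = 1) : g ∈ Subgroup.upperCentralSeries G n := by
  induction n generalizing g with
  | zero =>
    have := h fun _ => 1
    simp only [itc_zero] at this
    simp [this, Subgroup.upperCentralSeries_zero]
  | succ n ih =>
    rw [Subgroup.mem_upperCentralSeries_succ_iff]
    intro y
    have : g * y * g⁻¹ * y⁻¹ = ⁅g, y⁆ := (commutatorElement_def _ _).symm
    apply ih
    intro x
    have := h (fun i => Nat.casesOn i y x)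
    rw [← itc_shift] at this
    exact this

end Aux

/-- Let `G` be a topological group and `α` a contractive automorphism
(a group automorphism, continuous with continuous inverse, with `α^[n] g → 1` for all
`g`). If `G` has a nilpotent open subgroup, then `G` is nilpotent. -/
theorem stmt4 {G : Type*} [Group G] [TopologicalSpace G] [IsTopologicalGroup G]
    (α : G ≃* G) (hα : Continuous α) (hα' : Continuous α.symm)
    (hcontr : ∀ g : G, Filter.Tendsto (fun n : ℕ => (⇑α)^[n] g) Filter.atTop (nhds 1))
    (U : Subgroup G) (hUopen : IsOpen (U : Set G)) (hUnilp : Group.IsNilpotent U) :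
    Group.IsNilpotent G := by
  obtain ⟨c, hc⟩ := Subgroup.nilpotent_iff_lowerCentralSeries.mp hUnilp
  refine ⟨⟨c, eq_top_iff.mpr fun g _ => ?_⟩⟩
  apply mem_upperCentralSeries_of_itc
  intro x
  -- find N with α^[N] of all relevant elements in U
  have hU1 : (U : Set G) ∈ nhds (1 : G) := hUopen.mem_nhds U.one_mem
  have hev : ∀ᶠ N : ℕ in Filter.atTop,
      (⇑α)^[N] g ∈ U ∧ ∀ i ∈ Finset.range c, (⇑α)^[N] (x i) ∈ U := by
    refine ((hcontr g).eventually hU1).and ?_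
    rw [Filter.eventually_all_finset]
    exact fun i _ => (hcontr (x i)).eventually hU1
  have hmap : ∀ (N : ℕ) (h : G) (m : ℕ) (y : ℕ → G),
      (⇑α)^[N] (itc h m y) = itc ((⇑α)^[N] h) m (fun i => (⇑α)^[N] (y i)) := by
    intro N h m y
    induction N with
    | zero => simp
    | succ N ih =>
      have h1 : ∀ a : G, (⇑α)^[N + 1] a = α ((⇑α)^[N] a) := fun a =>
        Function.iterate_succ_apply' _ _ _
      simp only [h1]
      rw [ih]
      exact itc_map α _ _ _
  obtain ⟨N, hgU, hxU⟩ := hev.exists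
  have hinj : Function.Injective ((⇑α)^[N]) := α.injective.iterate N
  apply hinj
  rw [hmap N, Function.iterate_fixed (map_one α) N]
  -- now everything is in U
  set u : U := ⟨(⇑α)^[N] g, hgU⟩
  set ux : ℕ → U := fun i => if h : i < c then ⟨(⇑α)^[N] (x i), hxU i (Finset.mem_range.mpr h)⟩
    else 1
  have key : itc u c ux = 1 := by
    have := itc_mem_lowerCentralSeries u c ux
    rwa [hc, Subgroup.mem_bot] at this
  have final : itc (U.subtype u) c (fun i => U.subtype (ux i)) = 1 := by
    rw [← itc_map U.subtype u c ux, key, map_one]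
  have congr1 : itc ((⇑α)^[N] g) c (fun i => (⇑α)^[N] (x i))
      = itc (U.subtype u) c (fun i => U.subtype (ux i)) := by
    apply itc_congr
    intro i hi
    simp [ux, hi, Subgroup.coe_subtype]
  rw [congr1, final]
end

section
/- Let G be a topological group and α : G → G a contractive automorphism. If G has a soluble open subgroup, then G is soluble. -/
open Subgroup Filter
open scoped commutatorElement

/-- Iterated commutator values: `iterCm G 0 = univ`,
`iterCm G (n+1)` = commutators of elements of `iterCm G n`. -/
private def iterCm (G : Type*) [Group G] : ℕ → Set G
  | 0 => Set.univ
  | n + 1 => {x | ∃ a ∈ iterCm G n, ∃ b ∈ iterCm G n, x = ⁅a, b⁆}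

private lemma iterCm_map {G H : Type*} [Group G] [Group H] (f : G →* H) :
    ∀ n, ∀ x ∈ iterCm G n, f x ∈ iterCm H n := by
  intro n
  induction n with
  | zero => intro x _; trivial
  | succ n ih =>
    rintro x ⟨a, ha, b, hb, rfl⟩
    exact ⟨f a, ih a ha, f b, ih b hb, map_commutatorElement f a b⟩

private lemma iterCm_conj {G : Type*} [Group G] (n : ℕ) (g : G) :
    ∀ x ∈ iterCm G n, g * x * g⁻¹ ∈ iterCm G n := by
  intro x hx
  have := iterCm_map (MulAut.conj g).toMonoidHom n x hx
  simpa [MulAut.conj_apply, mul_assoc] using this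

private lemma iterCm_closure_normal {G : Type*} [Group G] (n : ℕ) :
    (closure (iterCm G n)).Normal := by
  constructor
  intro x hx g
  have hmap : (closure (iterCm G n)).map (MulAut.conj g).toMonoidHom
      ≤ closure (iterCm G n) := by
    rw [MonoidHom.map_closure]
    apply Subgroup.closure_mono
    rintro _ ⟨s, hs, rfl⟩
    simpa [MulAut.conj_apply, mul_assoc] using iterCm_conj n g s hs
  have := hmap (Subgroup.mem_map_of_mem _ hx)
  simpa [MulAut.conj_apply, mul_assoc] using this

private lemma commute_closure {G : Type*} [Group G] {S : Set G}
    (hS : ∀ a ∈ S, ∀ b ∈ S, Commute a b) :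
    ∀ x ∈ closure S, ∀ y ∈ closure S, Commute x y := by
  intro x hx
  refine closure_induction (fun a ha => ?_) (fun y _ => Commute.one_left y)
    (fun a b _ _ iha ihb y hy => (iha y hy).mul_left (ihb y hy))
    (fun a _ iha y hy => (iha y hy).inv_left) hx
  -- a ∈ S : show ∀ y ∈ closure S, Commute a y
  intro y hy
  refine closure_induction (fun b hb => hS a ha b hb) (Commute.one_right a)
    (fun b c _ _ ihb ihc => ihb.mul_right ihc)
    (fun b _ ihb => ihb.inv_right) hy

private lemma commutator_closure_le {G : Type*} [Group G] (S T : Set G)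
    (hN : (closure T).Normal)
    (hST : ∀ a ∈ S, ∀ b ∈ S, ⁅a, b⁆ ∈ T) :
    ⁅closure S, closure S⁆ ≤ closure T := by
  rw [Subgroup.commutator_le]
  intro a ha b hb
  let π := QuotientGroup.mk' (closure T)
  have hπS : ∀ s ∈ S, ∀ t ∈ S, Commute (π s) (π t) := by
    intro s hs t ht
    have : π ⁅s, t⁆ = 1 := by
      rw [QuotientGroup.mk'_apply, QuotientGroup.eq_one_iff]
      exact subset_closure (hST s hs t ht)
    rw [map_commutatorElement] at this
    exact commutatorElement_eq_one_iff_commute.mp this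
  have hmem : ∀ x ∈ closure S, π x ∈ closure (π '' S) := by
    intro x hx
    rw [← MonoidHom.map_closure]
    exact Subgroup.mem_map_of_mem _ hx
  have hcomm : Commute (π a) (π b) := by
    apply commute_closure (S := π '' S) ?_ _ (hmem a ha) _ (hmem b hb)
    rintro _ ⟨s, hs, rfl⟩ _ ⟨t, ht, rfl⟩
    exact hπS s hs t ht
  have : π ⁅a, b⁆ = 1 := by
    rw [map_commutatorElement]
    exact commutatorElement_eq_one_iff_commute.mpr hcomm
  rwa [QuotientGroup.mk'_apply, QuotientGroup.eq_one_iff] at this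

private lemma derivedSeries_le_closure_iterCm {G : Type*} [Group G] :
    ∀ n, derivedSeries G n ≤ closure (iterCm G n) := by
  intro n
  induction n with
  | zero => simp [iterCm, Subgroup.closure_univ]
  | succ n ih =>
    rw [derivedSeries_succ]
    refine le_trans (Subgroup.commutator_mono ih ih) ?_
    exact commutator_closure_le _ _ (iterCm_closure_normal (n + 1))
      (fun a ha b hb => ⟨a, ha, b, hb, rfl⟩)

private lemma iterCm_subset_derivedSeries {G : Type*} [Group G] :
    ∀ n, ∀ x ∈ iterCm G n, x ∈ derivedSeries G n := by
  intro n
  induction n with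
  | zero => intro x _; exact Subgroup.mem_top x
  | succ n ih =>
    rintro x ⟨a, ha, b, hb, rfl⟩
    rw [derivedSeries_succ]
    exact Subgroup.commutator_mem_commutator (ih a ha) (ih b hb)

private lemma iterate_map_commutatorElement {G : Type*} [Group G] (α : G ≃* G)
    (k : ℕ) (z w : G) : (⇑α)^[k] ⁅z, w⁆ = ⁅(⇑α)^[k] z, (⇑α)^[k] w⁆ := by
  induction k with
  | zero => rfl
  | succ k ih =>
    rw [Function.iterate_succ_apply', Function.iterate_succ_apply',
      Function.iterate_succ_apply', ih, map_commutatorElement]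

/-- Let `G` be a topological group and `α` a contractive automorphism
(a group automorphism, continuous with continuous inverse, with `α^[n] g → 1` for all
`g`). If `G` has a soluble open subgroup, then `G` is soluble. -/
theorem stmt5 {G : Type*} [Group G] [TopologicalSpace G] [IsTopologicalGroup G]
    (α : G ≃* G) (hα : Continuous α) (hα' : Continuous α.symm)
    (hcontr : ∀ g : G, Filter.Tendsto (fun n : ℕ => (⇑α)^[n] g) Filter.atTop (nhds 1))
    (U : Subgroup G) (hUopen : IsOpen (U : Set G)) (hUsol : IsSolvable U) :
    IsSolvable G := by
  obtain ⟨n, hn⟩ := hUsol.solvable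
  -- every iterated commutator value eventually lands in (the image of) `iterCm U m`
  have key : ∀ m, ∀ x ∈ iterCm G m,
      ∀ᶠ k in atTop, ∃ y : U, y ∈ iterCm U m ∧ (⇑α)^[k] x = ↑y := by
    intro m
    induction m with
    | zero =>
      intro x _
      have hev : ∀ᶠ k in atTop, (⇑α)^[k] x ∈ (U : Set G) :=
        (hcontr x).eventually_mem (hUopen.mem_nhds U.one_mem)
      exact hev.mono fun k hk => ⟨⟨_, hk⟩, trivial, rfl⟩
    | succ m ih =>
      rintro x ⟨a, ha, b, hb, rfl⟩
      filter_upwards [ih a ha, ih b hb] with k hka hkb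
      obtain ⟨ya, hya, hya'⟩ := hka
      obtain ⟨yb, hyb, hyb'⟩ := hkb
      refine ⟨⁅ya, yb⁆, ⟨ya, hya, yb, hyb, rfl⟩, ?_⟩
      rw [iterate_map_commutatorElement, hya', hyb']
      rfl
  -- hence all (n+1)-fold commutator values in `G` are trivial
  have triv : ∀ x ∈ iterCm G (n + 1), x = 1 := by
    intro x hx
    obtain ⟨k, y, hy, hky⟩ := (key (n + 1) x hx).exists
    have hyD : y ∈ derivedSeries U (n + 1) := iterCm_subset_derivedSeries _ y hy
    have hbot : derivedSeries ↥U (n + 1) = ⊥ := by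
      rw [derivedSeries_succ, hn]
      simp
    rw [hbot, Subgroup.mem_bot] at hyD
    have h1 : (⇑α)^[k] x = 1 := by rw [hky, hyD]; rfl
    have hinj : Function.Injective ((⇑α)^[k]) := Function.Injective.iterate α.injective k
    have h2 : (⇑α)^[k] (1 : G) = 1 := Function.iterate_fixed (map_one α) k
    exact hinj (h1.trans h2.symm)
  have hD : derivedSeries G (n + 1) = ⊥ := by
    refine le_antisymm ?_ bot_le
    refine le_trans (derivedSeries_le_closure_iterCm (n + 1)) ?_
    rw [Subgroup.closure_le]
    intro x hx
    simp [triv x hx]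
  exact ⟨⟨n + 1, hD⟩⟩
end

section
/- Let A = F_p((t)) with contractive automorphism α(x) = t·x. For n ∈ ℤ define ω_n : A × A → A by ω_n(x, y) = ∑_{i} x_i y_{i+n} t^i, where x = ∑ x_i t^i and y = ∑ y_j t^j (with coefficients eventually indexed from below). Then ω_n is well-defined (the series converges), continuous, biadditive, equivariant (ω_n(tx, ty) = t·ω_n(x,y)), and satisfies |ω_n(x,y)| ≤ |x| for all x, y ∈ A. -/
open scoped Classical

/-- The absolute value on `F_p((t))`: `|x| = p^{-N}` where `N` is the least index with
nonzero coefficient, and `|0| = 0`. -/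
noncomputable def labs (p : ℕ) (x : LaurentSeries (ZMod p)) : ℝ :=
  if x = 0 then 0 else (p : ℝ) ^ (-(HahnSeries.order x))

/-- The biadditive map `ω_n(x,y) = ∑_i x_i y_{i+n} t^i` on `F_p((t))`, defined
coefficientwise (which encodes the convergence of the defining series). -/
noncomputable def omegaMap (p : ℕ) (n : ℤ) (x y : LaurentSeries (ZMod p)) :
    LaurentSeries (ZMod p) where
  coeff := fun i => x.coeff i * y.coeff (i + n)
  isPWO_support' := x.isPWO_support.mono fun _ hi => left_ne_zero_of_mul hi

/-- The element `t ∈ F_p((t))`. -/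
noncomputable def tVar (p : ℕ) : LaurentSeries (ZMod p) := HahnSeries.single 1 1

section aux

lemma labs_nonneg {p : ℕ} (x : LaurentSeries (ZMod p)) : 0 ≤ labs p x := by
  unfold labs
  have : (0:ℝ) ≤ (p : ℝ) ^ (-(HahnSeries.order x)) ∨ p = 0 := by
    rcases Nat.eq_zero_or_pos p with h | h
    · right; exact h
    · left; positivity
  split
  · exact le_rfl
  · rcases this with h | h
    · exact h
    · simp [h]
      positivity

lemma one_lt_p {p : ℕ} (hp : p.Prime) : (1 : ℝ) < (p : ℝ) := by
  exact_mod_cast hp.one_lt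

/-- If every nonzero coefficient sits at index ≥ m, then `labs x ≤ p^{-m}`. -/
lemma labs_le_of_forall {p : ℕ} (hp : p.Prime) (m : ℤ) (x : LaurentSeries (ZMod p))
    (h : ∀ i : ℤ, x.coeff i ≠ 0 → m ≤ i) : labs p x ≤ (p : ℝ) ^ (-m) := by
  unfold labs
  split
  · positivity
  · rename_i hx
    have hm : m ≤ x.order := h _ (HahnSeries.coeff_order_eq_zero.not.mpr hx)
    exact zpow_le_zpow_right₀ (one_lt_p hp).le (neg_le_neg hm)

lemma labs_le_labs_of {p : ℕ} (hp : p.Prime) (x y : LaurentSeries (ZMod p)) (hy : y ≠ 0)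
    (h : ∀ i : ℤ, x.coeff i ≠ 0 → y.coeff i ≠ 0) : labs p x ≤ labs p y := by
  have := labs_le_of_forall hp y.order x
    (fun i hi => HahnSeries.order_le_of_coeff_ne_zero (h i hi))
  simpa only [labs, if_neg hy] using this

lemma labs_omega_le_left {p : ℕ} (hp : p.Prime) (n : ℤ) (x y : LaurentSeries (ZMod p)) :
    labs p (omegaMap p n x y) ≤ labs p x := by
  by_cases hx : x = 0
  · have : omegaMap p n x y = 0 := by
      ext i; simp [omegaMap, hx]
    rw [this, hx]
  · exact labs_le_labs_of hp _ x hx fun i hi => left_ne_zero_of_mul hi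

lemma labs_omega_le_right {p : ℕ} (hp : p.Prime) (n : ℤ) (x y : LaurentSeries (ZMod p)) :
    labs p (omegaMap p n x y) ≤ (p : ℝ) ^ n * labs p y := by
  by_cases hy : y = 0
  · have : omegaMap p n x y = 0 := by
      ext i; simp [omegaMap, hy]
    rw [this, labs, if_pos rfl]
    have : (0:ℝ) ≤ (p:ℝ) ^ n * labs p y := by
      have := labs_nonneg (p := p) y
      have hp0 : (0:ℝ) < (p:ℝ) := lt_trans one_pos (one_lt_p hp)
      positivity
    exact this
  · have h := labs_le_of_forall hp (y.order - n) (omegaMap p n x y) ?_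
    · refine h.trans ?_
      have hpne : (p:ℝ) ≠ 0 := by
        exact_mod_cast hp.pos.ne'
      rw [labs, if_neg hy, neg_sub, sub_eq_add_neg, zpow_add₀ hpne]
    · intro i hi
      have : y.coeff (i + n) ≠ 0 := right_ne_zero_of_mul hi
      have := HahnSeries.order_le_of_coeff_ne_zero this
      omega

lemma labs_add_le {p : ℕ} (hp : p.Prime) (x y : LaurentSeries (ZMod p)) :
    labs p (x + y) ≤ max (labs p x) (labs p y) := by
  by_cases hx : x = 0
  · simp [hx, le_max_iff, le_refl]
  by_cases hy : y = 0
  · simp [hy, le_max_iff, le_refl]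
  by_cases hxy : x + y = 0
  · simp only [hxy, labs, if_pos rfl, le_max_iff]
    left; positivity
  · rw [labs, if_neg hxy, labs, if_neg hx, labs, if_neg hy]
    have hmin := HahnSeries.min_order_le_order_add hxy
    rcases min_le_iff.mp (le_refl (min x.order y.order)) with h | h
    all_goals {
      rcases le_total x.order y.order with hor | hor
      · refine le_max_of_le_left ?_
        exact zpow_le_zpow_right₀ (one_lt_p hp).le
          (neg_le_neg (le_trans (by simp [min_eq_left hor]) hmin))
      · refine le_max_of_le_right ?_
        exact zpow_le_zpow_right₀ (one_lt_p hp).le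
          (neg_le_neg (le_trans (by simp [min_eq_right hor]) hmin))
    }

end aux

/-- The map `ω_n(x,y) = ∑_i x_i y_{i+n} t^i` on `A = F_p((t))` is
well-defined (with the stated coefficients), continuous (jointly, in the ultrametric
sense), biadditive, equivariant (`ω_n(tx,ty) = t ω_n(x,y)`), and satisfies
`|ω_n(x,y)| ≤ |x|`. -/
theorem stmt12 {p : ℕ} (hp : p.Prime) (n : ℤ) :
    -- well-defined, with the defining coefficients
    (∀ x y : LaurentSeries (ZMod p), ∀ i : ℤ,
        (omegaMap p n x y).coeff i = x.coeff i * y.coeff (i + n)) ∧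
    -- jointly continuous
    (∀ x y : LaurentSeries (ZMod p), ∀ ε : ℝ, 0 < ε → ∃ δ : ℝ, 0 < δ ∧
        ∀ x' y' : LaurentSeries (ZMod p), labs p (x' - x) < δ → labs p (y' - y) < δ →
          labs p (omegaMap p n x' y' - omegaMap p n x y) < ε) ∧
    -- biadditive
    (∀ x x' y : LaurentSeries (ZMod p),
        omegaMap p n (x + x') y = omegaMap p n x y + omegaMap p n x' y) ∧
    (∀ x y y' : LaurentSeries (ZMod p),
        omegaMap p n x (y + y') = omegaMap p n x y + omegaMap p n x y') ∧
    -- equivariant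
    (∀ x y : LaurentSeries (ZMod p),
        omegaMap p n (tVar p * x) (tVar p * y) = tVar p * omegaMap p n x y) ∧
    -- bounded by |x|
    (∀ x y : LaurentSeries (ZMod p), labs p (omegaMap p n x y) ≤ labs p x) := by
  have hp1 : (1 : ℝ) < (p : ℝ) := one_lt_p hp
  have hppos : (0 : ℝ) < (p : ℝ) := lt_trans one_pos hp1
  refine ⟨fun x y i => rfl, ?_, ?_, ?_, ?_, fun x y => labs_omega_le_left hp n x y⟩
  · -- continuity
    intro x y ε hε
    refine ⟨min ε ((p : ℝ) ^ (-n) * ε), lt_min hε (by positivity), ?_⟩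
    intro x' y' hx' hy'
    have key : omegaMap p n x' y' - omegaMap p n x y
        = omegaMap p n (x' - x) y' + omegaMap p n x (y' - y) := by
      ext i
      simp only [omegaMap, HahnSeries.coeff_sub', HahnSeries.coeff_add', Pi.sub_apply,
        Pi.add_apply]
      ring
    rw [key]
    refine lt_of_le_of_lt (labs_add_le hp _ _) (max_lt ?_ ?_)
    · exact lt_of_le_of_lt (labs_omega_le_left hp n _ _)
        (lt_of_lt_of_le hx' (min_le_left _ _))
    · refine lt_of_le_of_lt (labs_omega_le_right hp n _ _) ?_
      have h1 : labs p (y' - y) < (p : ℝ) ^ (-n) * ε :=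
        lt_of_lt_of_le hy' (min_le_right _ _)
      calc (p : ℝ) ^ n * labs p (y' - y) < (p : ℝ) ^ n * ((p : ℝ) ^ (-n) * ε) := by
            exact mul_lt_mul_of_pos_left h1 (by positivity)
        _ = ε := by
            rw [← mul_assoc, ← zpow_add₀ (ne_of_gt hppos)]; simp
  · intro x x' y; ext i
    simp only [omegaMap, HahnSeries.coeff_add', Pi.add_apply]
    ring
  · intro x y y'; ext i
    simp only [omegaMap, HahnSeries.coeff_add', Pi.add_apply]
    ring
  · -- equivariance
    intro x y
    ext i
    have hsingle : ∀ z : LaurentSeries (ZMod p), ∀ j : ℤ,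
        (tVar p * z).coeff j = z.coeff (j - 1) := by
      intro z j
      have : j = (j - 1) + 1 := by ring
      rw [this, tVar, HahnSeries.coeff_single_mul_add, one_mul]
      simp
    rw [hsingle]
    show (tVar p * x).coeff i * (tVar p * y).coeff (i + n)
        = x.coeff (i - 1) * y.coeff ((i - 1) + n)
    rw [hsingle, hsingle]
    ring_nf
end

section
/- Let A = F_p((t)) with automorphism α(x) = tx. Let Z²_bil(A,A) denote the group of continuous, biadditive maps ω : A × A → A satisfying ω(tx, ty) = t·ω(x,y), and let B denote the set of two-sided sequences (a_m)_{m∈ℤ} in A such that a_m → 0 and t^m a_{-m} → 0 as m → ∞. Then the map b : Z²_bil(A,A) → B defined by b(ω) = (ω(t^0, t^m))_{m∈ℤ} is a group isomorphism (a bijective additive map). -/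
open scoped Classical

/-- Joint (ultrametric) continuity of a two-variable map on `F_p((t))`. -/
def LContinuous2 (p : ℕ)
    (f : LaurentSeries (ZMod p) → LaurentSeries (ZMod p) → LaurentSeries (ZMod p)) :
    Prop :=
  ∀ x y, ∀ ε : ℝ, 0 < ε → ∃ δ : ℝ, 0 < δ ∧
    ∀ x' y', labs p (x' - x) < δ → labs p (y' - y) < δ → labs p (f x' y' - f x y) < ε

/-- Membership in `Z²_bil(A,A)`: continuous, biadditive, equivariant maps `A × A → A`
where `A = F_p((t))` with automorphism `α(x) = tx`. -/
def IsBil (p : ℕ)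
    (ω : LaurentSeries (ZMod p) → LaurentSeries (ZMod p) → LaurentSeries (ZMod p)) :
    Prop :=
  LContinuous2 p ω ∧
  (∀ x x' y, ω (x + x') y = ω x y + ω x' y) ∧
  (∀ x y y', ω x (y + y') = ω x y + ω x y') ∧
  (∀ x y, ω (tVar p * x) (tVar p * y) = tVar p * ω x y)

/-- Membership in `B`: two-sided sequences `(a_m)_{m ∈ ℤ}` in `A` with `a_m → 0` and
`t^m a_{-m} → 0` as `m → ∞`. -/
def InB (p : ℕ) (a : ℤ → LaurentSeries (ZMod p)) : Prop :=
  Filter.Tendsto (fun m : ℕ => labs p (a m)) Filter.atTop (nhds 0) ∧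
  Filter.Tendsto (fun m : ℕ => labs p ((tVar p) ^ m * a (-(m : ℤ)))) Filter.atTop (nhds 0)

namespace Stmt13

variable {p : ℕ} [Fact p.Prime]

lemma one_lt_p : (1:ℝ) < p := by
  have := (Fact.out : p.Prime).two_le
  exact_mod_cast Nat.lt_of_lt_of_le one_lt_two this

lemma p_pos : (0:ℝ) < p := lt_trans one_pos one_lt_p

lemma labs_nonneg (x : LaurentSeries (ZMod p)) : 0 ≤ labs p x := by
  unfold labs; split
  · exact le_refl 0
  · exact (zpow_pos p_pos _).le

lemma labs_zero : labs p (0 : LaurentSeries (ZMod p)) = 0 := if_pos rfl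

lemma labs_pos {x : LaurentSeries (ZMod p)} (hx : x ≠ 0) : 0 < labs p x := by
  unfold labs; rw [if_neg hx]; exact zpow_pos p_pos _

lemma labs_le_pow_iff {x : LaurentSeries (ZMod p)} {N : ℤ} :
    labs p x ≤ (p:ℝ) ^ (-N) ↔ ∀ j < N, x.coeff j = 0 := by
  unfold labs
  split_ifs with h
  · subst h
    simp only [HahnSeries.coeff_zero, implies_true, iff_true]
    exact (zpow_pos p_pos _).le
  · rw [zpow_le_zpow_iff_right₀ one_lt_p, neg_le_neg_iff]
    constructor
    · intro hN j hj
      exact HahnSeries.coeff_eq_zero_of_lt_order (lt_of_lt_of_le hj hN)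
    · intro hc
      by_contra hlt
      push_neg at hlt
      exact (mt HahnSeries.coeff_order_eq_zero.mp h) (hc _ hlt)

lemma coeff_zero_of_labs_lt {x : LaurentSeries (ZMod p)} {N : ℤ}
    (h : labs p x < (p:ℝ) ^ (-N)) : ∀ j ≤ N, x.coeff j = 0 := by
  intro j hj
  have : labs p x ≤ (p:ℝ) ^ (-(N+1)) := by
    rcases eq_or_ne x 0 with rfl | hx
    · rw [labs_zero]; exact (zpow_pos p_pos _).le
    · unfold labs at h ⊢
      rw [if_neg hx] at h ⊢
      rw [zpow_lt_zpow_iff_right₀ one_lt_p, neg_lt_neg_iff] at h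
      rw [zpow_le_zpow_iff_right₀ one_lt_p, neg_le_neg_iff]
      omega
  exact labs_le_pow_iff.mp this j (by omega)

lemma labs_lt_of_coeff_zero {x : LaurentSeries (ZMod p)} {N : ℤ}
    (h : ∀ j < N, x.coeff j = 0) : labs p x < (p:ℝ) ^ (-(N-1)) := by
  have h1 : labs p x ≤ (p:ℝ) ^ (-N) := labs_le_pow_iff.mpr h
  refine lt_of_le_of_lt h1 ?_
  rw [zpow_lt_zpow_iff_right₀ one_lt_p]
  omega

lemma exists_pow_lt {ε : ℝ} (hε : 0 < ε) : ∃ N : ℕ, (p:ℝ) ^ (-(N:ℤ)) < ε := by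
  obtain ⟨n, hn⟩ := exists_pow_lt_of_lt_one hε (by
    rw [inv_lt_one_iff₀]; right; exact one_lt_p : (p:ℝ)⁻¹ < 1)
  exact ⟨n, by rwa [zpow_neg, zpow_natCast, ← inv_pow]⟩

lemma labs_neg (x : LaurentSeries (ZMod p)) : labs p (-x) = labs p x := by
  unfold labs
  rw [HahnSeries.order_neg, neg_eq_zero]

lemma labs_add_le (x y : LaurentSeries (ZMod p)) :
    labs p (x + y) ≤ max (labs p x) (labs p y) := by
  rcases eq_or_ne (x + y) 0 with h | h
  · rw [labs, if_pos h]
    exact le_max_of_le_left (labs_nonneg x)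
  rcases eq_or_ne x 0 with rfl | hx
  · rw [zero_add]; exact le_max_right _ _
  rcases eq_or_ne y 0 with rfl | hy
  · rw [add_zero]; exact le_max_left _ _
  unfold labs
  rw [if_neg h, if_neg hx, if_neg hy]
  have hmin := HahnSeries.min_order_le_order_add h
  rcases min_le_iff.mp hmin with h' | h'
  · refine le_max_of_le_left ?_
    rw [zpow_le_zpow_iff_right₀ one_lt_p]
    omega
  · refine le_max_of_le_right ?_
    rw [zpow_le_zpow_iff_right₀ one_lt_p]
    omega

lemma eq_zero_of_forall_labs_lt {x : LaurentSeries (ZMod p)}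
    (h : ∀ ε : ℝ, 0 < ε → labs p x < ε) : x = 0 := by
  by_contra hx
  exact lt_irrefl _ (h _ (labs_pos hx))

lemma tpow_nat (m : ℕ) : tVar p ^ m = HahnSeries.single (m : ℤ) 1 := by
  induction m with
  | zero => simp [HahnSeries.single_zero_one]
  | succ n ih =>
      rw [pow_succ, ih, tVar, HahnSeries.single_mul_single, one_mul]
      norm_num

lemma tVar_ne_zero : tVar p ≠ 0 := HahnSeries.single_ne_zero one_ne_zero

lemma tpow (m : ℤ) : tVar p ^ m = HahnSeries.single m 1 := by
  cases m with
  | ofNat n => rw [Int.ofNat_eq_coe, zpow_natCast, tpow_nat]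
  | negSucc n =>
      rw [show Int.negSucc n = -((n+1:ℕ):ℤ) from rfl, zpow_neg, zpow_natCast, tpow_nat]
      refine inv_eq_of_mul_eq_one_right ?_
      rw [HahnSeries.single_mul_single, one_mul]
      rw [show ((n+1:ℕ):ℤ) + (-((n+1:ℕ):ℤ)) = 0 by ring]
      exact HahnSeries.single_zero_one

lemma tpow_ne_zero (m : ℤ) : tVar p ^ m ≠ 0 := by
  rw [tpow]; exact HahnSeries.single_ne_zero one_ne_zero

lemma labs_tpow (m : ℤ) : labs p (tVar p ^ m) = (p:ℝ) ^ (-m) := by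
  rw [tpow, labs, if_neg (HahnSeries.single_ne_zero one_ne_zero),
    HahnSeries.order_single one_ne_zero]

lemma single_mul_coeff (s : ℤ) (x : LaurentSeries (ZMod p)) (r : ℤ) :
    (HahnSeries.single s (1 : ZMod p) * x).coeff r = x.coeff (r - s) := by
  have := HahnSeries.coeff_single_mul_add (r := (1 : ZMod p)) (x := x) (a := r - s) (b := s)
  rw [sub_add_cancel] at this
  rw [this, one_mul]

lemma tendsto_iff {f : ℕ → LaurentSeries (ZMod p)} :
    Filter.Tendsto (fun m : ℕ => labs p (f m)) Filter.atTop (nhds 0) ↔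
      ∀ ε : ℝ, 0 < ε → ∃ M : ℕ, ∀ m ≥ M, labs p (f m) < ε := by
  rw [Metric.tendsto_atTop]
  constructor
  · intro h ε hε
    obtain ⟨M, hM⟩ := h ε hε
    exact ⟨M, fun m hm => by
      have := hM m hm
      rwa [Real.dist_eq, sub_zero, abs_of_nonneg (labs_nonneg _)] at this⟩
  · intro h ε hε
    obtain ⟨M, hM⟩ := h ε hε
    exact ⟨M, fun m hm => by
      rw [Real.dist_eq, sub_zero, abs_of_nonneg (labs_nonneg _)]
      exact hM m hm⟩


variable {a : ℤ → LaurentSeries (ZMod p)}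

/-- `a k` is small for `k` large. -/
def HA (p : ℕ) (a : ℤ → LaurentSeries (ZMod p)) : Prop :=
  ∀ N : ℤ, ∃ M : ℤ, ∀ k, M ≤ k → ∀ j < N, (a k).coeff j = 0

/-- `t^{-k} a k` is small for `k` very negative. -/
def HB (p : ℕ) (a : ℤ → LaurentSeries (ZMod p)) : Prop :=
  ∀ N : ℤ, ∃ M : ℤ, 0 ≤ M ∧ ∀ k, k ≤ -M → ∀ j < N + k, (a k).coeff j = 0

lemma HC (hA : HA p a) : ∀ K : ℤ, ∃ c : ℤ, ∀ k, K ≤ k → ∀ j < c, (a k).coeff j = 0 := by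
  intro K
  obtain ⟨M, hM⟩ := hA 0
  have hfin : ((fun k => (a k).order) '' Set.Icc K M).Finite :=
    (Set.finite_Icc K M).image _
  obtain ⟨c0, hc0⟩ := hfin.bddBelow
  refine ⟨min c0 0, fun k hk j hj => ?_⟩
  by_cases hkM : k ≤ M
  · have : c0 ≤ (a k).order := hc0 ⟨k, ⟨hk, hkM⟩, rfl⟩
    exact HahnSeries.coeff_eq_zero_of_lt_order (by omega)
  · exact hM k (by omega) j (by omega)

lemma L1 (hA : HA p a) (hB : HB p a) (Nx Ny r : ℤ) :
    {q : ℤ × ℤ | Nx ≤ q.1 ∧ Ny ≤ q.2 ∧ (a (q.2 - q.1)).coeff (r - q.1) ≠ 0}.Finite := by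
  obtain ⟨M1, hM1⟩ := hA (r - Nx + 1)
  obtain ⟨M2, hM2nonneg, hM2⟩ := hB (r - Ny + 1)
  obtain ⟨c, hc⟩ := HC hA (-M2)
  refine Set.Finite.subset ((Set.finite_Icc Nx (r - c)).prod
    (Set.finite_Icc Ny (r - c + M1))) ?_
  rintro ⟨n, m⟩ ⟨hn, hm, hne⟩
  have hk1 : m - n < M1 := by
    by_contra h
    push_neg at h
    exact hne (hM1 (m - n) h (r - n) (by omega))
  have hk2 : -M2 < m - n := by
    by_contra h
    push_neg at h
    exact hne (hM2 (m - n) h (r - n) (by omega))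
  have hn2 : n ≤ r - c := by
    by_contra h
    push_neg at h
    exact hne (hc (m - n) (by omega) (r - n) (by omega))
  exact ⟨⟨hn, hn2⟩, ⟨hm, by omega⟩⟩

lemma L2 (hA : HA p a) (hB : HB p a) (Nx Ny : ℤ) :
    ∃ B : ℤ, ∀ n m j : ℤ, Nx ≤ n → Ny ≤ m → n + j < B → (a (m - n)).coeff j = 0 := by
  obtain ⟨M2, hM2nonneg, hM2⟩ := hB 0
  obtain ⟨c, hc⟩ := HC hA (-M2)
  refine ⟨min Ny (Nx + c), fun n m j hn hm hj => ?_⟩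
  rcases le_or_gt (m - n) (-M2) with h | h
  · exact hM2 (m - n) h j (by omega)
  · exact hc (m - n) (by omega) j (by omega)

lemma L3 (hA : HA p a) (hB : HB p a) (Ny R : ℤ) :
    ∃ D : ℤ, ∀ n m j : ℤ, D ≤ n → Ny ≤ m → n + j < R → (a (m - n)).coeff j = 0 := by
  obtain ⟨M2, hM2nonneg, hM2⟩ := hB (R - Ny)
  obtain ⟨c, hc⟩ := HC hA (-M2)
  refine ⟨R - c, fun n m j hn hm hj => ?_⟩
  rcases le_or_gt (m - n) (-M2) with h | h
  · exact hM2 (m - n) h j (by omega)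
  · exact hc (m - n) (by omega) j (by omega)

lemma L4 (hA : HA p a) (hB : HB p a) (Nx R : ℤ) :
    ∃ D : ℤ, ∀ n m j : ℤ, Nx ≤ n → D ≤ m → n + j < R → (a (m - n)).coeff j = 0 := by
  obtain ⟨M1, hM1⟩ := hA (R - Nx)
  obtain ⟨M2, hM2nonneg, hM2⟩ := hB 0
  obtain ⟨c, hc⟩ := HC hA (-M2)
  refine ⟨max R (R + M1 - c), fun n m j hn hm hj => ?_⟩
  rcases le_or_gt M1 (m - n) with h1 | h1
  · exact hM1 (m - n) h1 j (by omega)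
  rcases le_or_gt (m - n) (-M2) with h2 | h2
  · exact hM2 (m - n) h2 j (by omega)
  · exact hc (m - n) (by omega) j (by omega)

/-- The coefficient function of the constructed cocycle. -/
noncomputable def oc (p : ℕ) (a : ℤ → LaurentSeries (ZMod p))
    (x y : LaurentSeries (ZMod p)) (r : ℤ) : ZMod p :=
  ∑ᶠ q : ℤ × ℤ, x.coeff q.1 * y.coeff q.2 * (a (q.2 - q.1)).coeff (r - q.1)

lemma term_ne_zero {x y : LaurentSeries (ZMod p)} {r : ℤ} {q : ℤ × ℤ}
    (h : x.coeff q.1 * y.coeff q.2 * (a (q.2 - q.1)).coeff (r - q.1) ≠ 0) :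
    x.coeff q.1 ≠ 0 ∧ y.coeff q.2 ≠ 0 ∧ (a (q.2 - q.1)).coeff (r - q.1) ≠ 0 := by
  rcases mul_ne_zero_iff.mp h with ⟨h1, h3⟩
  rcases mul_ne_zero_iff.mp h1 with ⟨h1, h2⟩
  exact ⟨h1, h2, h3⟩

lemma oc_support_finite (hA : HA p a) (hB : HB p a) (x y : LaurentSeries (ZMod p)) (r : ℤ) :
    (Function.support fun q : ℤ × ℤ =>
      x.coeff q.1 * y.coeff q.2 * (a (q.2 - q.1)).coeff (r - q.1)).Finite := by
  refine (L1 hA hB x.order y.order r).subset ?_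
  rintro ⟨n, m⟩ hq
  rw [Function.mem_support] at hq
  obtain ⟨h1, h2, h3⟩ := term_ne_zero hq
  exact ⟨HahnSeries.order_le_of_coeff_ne_zero h1, HahnSeries.order_le_of_coeff_ne_zero h2, h3⟩

lemma oc_add_left (hA : HA p a) (hB : HB p a) (x x' y : LaurentSeries (ZMod p)) (r : ℤ) :
    oc p a (x + x') y r = oc p a x y r + oc p a x' y r := by
  unfold oc
  rw [← finsum_add_distrib (oc_support_finite hA hB x y r) (oc_support_finite hA hB x' y r)]
  refine finsum_congr fun q => ?_
  rw [HahnSeries.coeff_add]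
  ring

lemma oc_add_right (hA : HA p a) (hB : HB p a) (x y y' : LaurentSeries (ZMod p)) (r : ℤ) :
    oc p a x (y + y') r = oc p a x y r + oc p a x y' r := by
  unfold oc
  rw [← finsum_add_distrib (oc_support_finite hA hB x y r) (oc_support_finite hA hB x y' r)]
  refine finsum_congr fun q => ?_
  rw [HahnSeries.coeff_add]
  ring

lemma oc_one_single (m r : ℤ) :
    oc p a 1 (HahnSeries.single m 1) r = (a m).coeff r := by
  unfold oc
  rw [finsum_eq_single _ ((0 : ℤ), m)]
  · simp
  · rintro ⟨n, m'⟩ hq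
    by_cases hn : n = 0
    · subst hn
      have hm : m' ≠ m := fun h => hq (by rw [h])
      rw [HahnSeries.coeff_single_of_ne hm]
      ring
    · rw [HahnSeries.coeff_one, if_neg hn]
      ring

lemma oc_equi (x y : LaurentSeries (ZMod p)) (r : ℤ) :
    oc p a (tVar p * x) (tVar p * y) r = oc p a x y (r - 1) := by
  unfold oc
  refine (finsum_eq_of_bijective (fun q : ℤ × ℤ => (q.1 + 1, q.2 + 1))
    ⟨fun q q' h => ?_, fun q => ⟨(q.1 - 1, q.2 - 1), by simp⟩⟩ fun q => ?_).symm
  · have h1 := congrArg Prod.fst h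
    have h2 := congrArg Prod.snd h
    simp only at h1 h2
    exact Prod.ext (by omega) (by omega)
  · show _ = (tVar p * x).coeff (q.1 + 1) * (tVar p * y).coeff (q.2 + 1) *
      (a ((q.2 + 1) - (q.1 + 1))).coeff (r - (q.1 + 1))
    rw [tVar, single_mul_coeff, single_mul_coeff]
    have e1 : q.1 + 1 - 1 = q.1 := by ring
    have e2 : q.2 + 1 - 1 = q.2 := by ring
    have e3 : (q.2 + 1) - (q.1 + 1) = q.2 - q.1 := by ring
    have e4 : r - (q.1 + 1) = r - 1 - q.1 := by ring
    rw [e1, e2, e3, e4]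

lemma oc_zero_below (hA : HA p a) (hB : HB p a) (x y : LaurentSeries (ZMod p)) :
    ∃ B : ℤ, ∀ r < B, oc p a x y r = 0 := by
  obtain ⟨B, hL⟩ := L2 hA hB x.order y.order
  refine ⟨B, fun r hr => finsum_eq_zero_of_forall_eq_zero fun q => ?_⟩
  by_contra h
  obtain ⟨h1, h2, h3⟩ := term_ne_zero h
  exact h3 (hL q.1 q.2 (r - q.1) (HahnSeries.order_le_of_coeff_ne_zero h1)
    (HahnSeries.order_le_of_coeff_ne_zero h2) (by omega))

lemma oc_pwo (hA : HA p a) (hB : HB p a) (x y : LaurentSeries (ZMod p)) :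
    (Function.support fun r => oc p a x y r).IsPWO := by
  obtain ⟨B, hB0⟩ := oc_zero_below hA hB x y
  have hbdd : BddBelow (Function.support fun r => oc p a x y r) := by
    refine ⟨B, fun r hr => ?_⟩
    rw [Function.mem_support] at hr
    by_contra h
    push_neg at h
    exact hr (hB0 r h)
  exact Set.IsWF.isPWO (BddBelow.wellFoundedOn_lt hbdd)

lemma oc_small_left (hA : HA p a) (hB : HB p a) (Ny R : ℤ) :
    ∃ D : ℤ, ∀ u y : LaurentSeries (ZMod p), (∀ k, k < D → u.coeff k = 0) →
      (∀ m, y.coeff m ≠ 0 → Ny ≤ m) → ∀ r < R, oc p a u y r = 0 := by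
  obtain ⟨D, hL⟩ := L3 hA hB Ny R
  refine ⟨D, fun u y hu hy r hr => finsum_eq_zero_of_forall_eq_zero fun q => ?_⟩
  by_contra h
  obtain ⟨h1, h2, h3⟩ := term_ne_zero h
  have hq1 : D ≤ q.1 := by
    by_contra h'
    exact h1 (hu q.1 (by omega))
  exact h3 (hL q.1 q.2 (r - q.1) hq1 (hy q.2 h2) (by omega))

lemma oc_small_right (hA : HA p a) (hB : HB p a) (Nx R : ℤ) :
    ∃ D : ℤ, ∀ x v : LaurentSeries (ZMod p), (∀ n, x.coeff n ≠ 0 → Nx ≤ n) →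
      (∀ k, k < D → v.coeff k = 0) → ∀ r < R, oc p a x v r = 0 := by
  obtain ⟨D, hL⟩ := L4 hA hB Nx R
  refine ⟨D, fun x v hx hv r hr => finsum_eq_zero_of_forall_eq_zero fun q => ?_⟩
  by_contra h
  obtain ⟨h1, h2, h3⟩ := term_ne_zero h
  have hq2 : D ≤ q.2 := by
    by_contra h'
    exact h2 (hv q.2 (by omega))
  exact h3 (hL q.1 q.2 (r - q.1) (hx q.1 h1) hq2 (by omega))

section OmegaGeneral

variable {ω : LaurentSeries (ZMod p) → LaurentSeries (ZMod p) → LaurentSeries (ZMod p)}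

lemma omega_zero_left (hadd : ∀ x x' y, ω (x + x') y = ω x y + ω x' y) (y : LaurentSeries (ZMod p)) :
    ω 0 y = 0 := by
  have h := hadd 0 0 y
  rw [add_zero] at h
  exact (add_eq_right.mp h.symm)

lemma omega_zero_right (hadd : ∀ x y y', ω x (y + y') = ω x y + ω x y') (x : LaurentSeries (ZMod p)) :
    ω x 0 = 0 := by
  have h := hadd x 0 0
  rw [add_zero] at h
  exact (add_eq_right.mp h.symm)

lemma omega_equi_nat (heq : ∀ x y, ω (tVar p * x) (tVar p * y) = tVar p * ω x y)
    (s : ℕ) (x y : LaurentSeries (ZMod p)) :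
    ω (tVar p ^ s * x) (tVar p ^ s * y) = tVar p ^ s * ω x y := by
  induction s generalizing x y with
  | zero => simp
  | succ n ih =>
      have e : ∀ z : LaurentSeries (ZMod p), tVar p ^ (n + 1) * z = tVar p ^ n * (tVar p * z) := by
        intro z; rw [pow_succ]; ring
      rw [e, e, ih (tVar p * x) (tVar p * y), heq, e]

lemma omega_equi_int (heq : ∀ x y, ω (tVar p * x) (tVar p * y) = tVar p * ω x y)
    (s : ℤ) (x y : LaurentSeries (ZMod p)) :
    ω (tVar p ^ s * x) (tVar p ^ s * y) = tVar p ^ s * ω x y := by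
  rcases le_or_gt 0 s with hs | hs
  · obtain ⟨n, rfl⟩ := Int.eq_ofNat_of_zero_le hs
    rw [zpow_natCast]
    exact omega_equi_nat heq n x y
  · set n : ℕ := (-s).toNat with hn
    have hsn : (n : ℤ) = -s := by omega
    have key := omega_equi_nat heq n (tVar p ^ s * x) (tVar p ^ s * y)
    have e : ∀ z : LaurentSeries (ZMod p), tVar p ^ (n : ℕ) * (tVar p ^ s * z) = z := by
      intro z
      rw [← mul_assoc, ← zpow_natCast (tVar p), ← zpow_add₀ tVar_ne_zero, hsn]
      rw [neg_add_cancel, zpow_zero, one_mul]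
    rw [e, e] at key
    have : tVar p ^ s * ω x y = tVar p ^ s * (tVar p ^ (n:ℕ) * ω (tVar p ^ s * x) (tVar p ^ s * y)) := by
      rw [← key]
    rw [this, ← mul_assoc, ← zpow_natCast (tVar p), ← zpow_add₀ tVar_ne_zero]
    rw [show s + (n:ℤ) = 0 by omega, zpow_zero, one_mul]

lemma single_add' (n : ℤ) (c d : ZMod p) :
    HahnSeries.single n (c + d) = HahnSeries.single n c + HahnSeries.single n d := by
  ext j
  rw [HahnSeries.coeff_add]
  simp only [HahnSeries.coeff_single]
  split <;> simp

lemma omega_nat_left (hadd : ∀ x x' y, ω (x + x') y = ω x y + ω x' y)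
    (n : ℤ) (y : LaurentSeries (ZMod p)) :
    ∀ k : ℕ, ω (HahnSeries.single n ((k : ℕ) : ZMod p)) y = k • ω (HahnSeries.single n 1) y := by
  intro k
  induction k with
  | zero => simpa using omega_zero_left hadd y
  | succ k ih =>
      have : ((k + 1 : ℕ) : ZMod p) = ((k : ℕ) : ZMod p) + 1 := by push_cast; ring
      rw [this, single_add', hadd, ih, succ_nsmul]

lemma omega_nat_right (hadd : ∀ x y y', ω x (y + y') = ω x y + ω x y')
    (x : LaurentSeries (ZMod p)) (m : ℤ) :
    ∀ k : ℕ, ω x (HahnSeries.single m ((k : ℕ) : ZMod p)) = k • ω x (HahnSeries.single m 1) := by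
  intro k
  induction k with
  | zero => simpa using omega_zero_right hadd x
  | succ k ih =>
      have : ((k + 1 : ℕ) : ZMod p) = ((k : ℕ) : ZMod p) + 1 := by push_cast; ring
      rw [this, single_add', hadd, ih, succ_nsmul]

lemma omega_sum_left (hadd : ∀ x x' y, ω (x + x') y = ω x y + ω x' y)
    {ι : Type*} (s : Finset ι) (f : ι → LaurentSeries (ZMod p)) (y : LaurentSeries (ZMod p)) :
    ω (∑ i ∈ s, f i) y = ∑ i ∈ s, ω (f i) y := by
  classical
  induction s using Finset.induction_on with
  | empty => simpa using omega_zero_left hadd y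
  | insert _ _ hnotmem ih =>
      rw [Finset.sum_insert hnotmem, Finset.sum_insert hnotmem, hadd, ih]

lemma omega_sum_right (hadd : ∀ x y y', ω x (y + y') = ω x y + ω x y')
    {ι : Type*} (x : LaurentSeries (ZMod p)) (s : Finset ι) (f : ι → LaurentSeries (ZMod p)) :
    ω x (∑ i ∈ s, f i) = ∑ i ∈ s, ω x (f i) := by
  classical
  induction s using Finset.induction_on with
  | empty => simpa using omega_zero_right hadd x
  | insert _ _ hnotmem ih =>
      rw [Finset.sum_insert hnotmem, Finset.sum_insert hnotmem, hadd, ih]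

end OmegaGeneral

/-- coefficient extraction as an additive monoid hom. -/
def coeffHom (j : ℤ) : LaurentSeries (ZMod p) →+ ZMod p where
  toFun x := x.coeff j
  map_zero' := rfl
  map_add' _ _ := HahnSeries.coeff_add

/-- Truncation of a Laurent series below level `D`, as a finite sum of singles. -/
noncomputable def truncF (x : LaurentSeries (ZMod p)) (D : ℤ) : LaurentSeries (ZMod p) :=
  ∑ n ∈ Finset.Icc x.order (D - 1), HahnSeries.single n (x.coeff n)

lemma truncF_coeff (x : LaurentSeries (ZMod p)) (D : ℤ) :
    ∀ j < D, (x - truncF x D).coeff j = 0 := by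
  intro j hj
  rw [HahnSeries.coeff_sub]
  have : (truncF x D).coeff j = ∑ n ∈ Finset.Icc x.order (D - 1),
      (HahnSeries.single n (x.coeff n)).coeff j := by
    exact map_sum (coeffHom (p := p) j) _ _
  rw [this]
  rw [sub_eq_zero]
  by_cases hmem : j ∈ Finset.Icc x.order (D - 1)
  · refine ((Finset.sum_eq_single_of_mem j hmem ?_).trans ?_).symm
    · intro b _ hb
      exact HahnSeries.coeff_single_of_ne (Ne.symm hb)
    · exact HahnSeries.coeff_single_same j _
  · have hx : x.coeff j = 0 := by
      rw [Finset.mem_Icc] at hmem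
      push_neg at hmem
      rcases le_or_gt x.order j with h | h
      · omega
      · exact HahnSeries.coeff_eq_zero_of_lt_order h
    rw [hx]
    refine (Finset.sum_eq_zero ?_).symm
    intro n hn
    exact HahnSeries.coeff_single_of_ne fun h => hmem (by rwa [← h] at hn)

end Stmt13

/-- The map `b : Z²_bil(A,A) → B`, `ω ↦ (ω(t⁰, t^m))_{m ∈ ℤ}`, is a
well-defined additive bijection (a group isomorphism for the pointwise additions). -/
theorem stmt13 {p : ℕ} (hp : p.Prime) [Fact p.Prime] :
    -- well-defined into B
    (∀ ω, IsBil p ω → InB p (fun m : ℤ => ω 1 ((tVar p) ^ m))) ∧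
    -- additive
    (∀ ω₁ ω₂, IsBil p ω₁ → IsBil p ω₂ →
      (fun m : ℤ => (fun x y => ω₁ x y + ω₂ x y) 1 ((tVar p) ^ m)) =
        (fun m : ℤ => ω₁ 1 ((tVar p) ^ m)) + (fun m : ℤ => ω₂ 1 ((tVar p) ^ m))) ∧
    -- injective
    (∀ ω₁ ω₂, IsBil p ω₁ → IsBil p ω₂ →
      (fun m : ℤ => ω₁ 1 ((tVar p) ^ m)) = (fun m : ℤ => ω₂ 1 ((tVar p) ^ m)) → ω₁ = ω₂) ∧
    -- surjective
    (∀ a : ℤ → LaurentSeries (ZMod p), InB p a →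
      ∃ ω, IsBil p ω ∧ (fun m : ℤ => ω 1 ((tVar p) ^ m)) = a) := by
  classical
  haveI : NeZero p := ⟨hp.ne_zero⟩
  refine ⟨?_, ?_, ?_, ?_⟩
  · -- well-definedness
    rintro ω ⟨hcont, haddl, haddr, heq⟩
    constructor
    · show Filter.Tendsto (fun m : ℕ => labs p (ω 1 (tVar p ^ (m : ℤ)))) Filter.atTop (nhds 0)
      rw [Stmt13.tendsto_iff]
      intro ε hε
      obtain ⟨δ, hδ, hδ'⟩ := hcont 1 0 ε hε
      obtain ⟨N, hN⟩ := Stmt13.exists_pow_lt (p := p) hδ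
      refine ⟨N, fun m hm => ?_⟩
      have h1 : labs p ((1 : LaurentSeries (ZMod p)) - 1) < δ := by
        rw [sub_self, Stmt13.labs_zero]; exact hδ
      have h2 : labs p (tVar p ^ (m : ℤ) - 0) < δ := by
        rw [sub_zero, Stmt13.labs_tpow]
        refine lt_of_le_of_lt ?_ hN
        rw [zpow_le_zpow_iff_right₀ Stmt13.one_lt_p]
        omega
      have h3 := hδ' 1 (tVar p ^ (m : ℤ)) h1 h2
      rwa [Stmt13.omega_zero_right haddr, sub_zero] at h3
    · show Filter.Tendsto
        (fun m : ℕ => labs p (tVar p ^ m * ω 1 (tVar p ^ (-(m : ℤ))))) Filter.atTop (nhds 0)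
      rw [Stmt13.tendsto_iff]
      intro ε hε
      obtain ⟨δ, hδ, hδ'⟩ := hcont 0 1 ε hε
      obtain ⟨N, hN⟩ := Stmt13.exists_pow_lt (p := p) hδ
      refine ⟨N, fun m hm => ?_⟩
      have key : tVar p ^ m * ω 1 (tVar p ^ (-(m : ℤ))) = ω (tVar p ^ (m : ℤ)) 1 := by
        have e : tVar p ^ ((m : ℤ)) * tVar p ^ (-(m : ℤ)) = 1 := by
          rw [← zpow_add₀ Stmt13.tVar_ne_zero]; simp
        have h := Stmt13.omega_equi_int heq (m : ℤ) 1 (tVar p ^ (-(m : ℤ)))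
        rw [mul_one, e] at h
        rw [← zpow_natCast (tVar p) m]
        exact h.symm
      rw [key]
      have h1 : labs p (tVar p ^ (m : ℤ) - 0) < δ := by
        rw [sub_zero, Stmt13.labs_tpow]
        refine lt_of_le_of_lt ?_ hN
        rw [zpow_le_zpow_iff_right₀ Stmt13.one_lt_p]
        omega
      have h2 : labs p ((1 : LaurentSeries (ZMod p)) - 1) < δ := by
        rw [sub_self, Stmt13.labs_zero]; exact hδ
      have h3 := hδ' (tVar p ^ (m : ℤ)) 1 h1 h2
      rwa [Stmt13.omega_zero_left haddl, sub_zero] at h3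
  · -- additivity
    rintro ω₁ ω₂ _ _
    rfl
  · -- injectivity
    rintro ω₁ ω₂ ⟨hc1, hal1, har1, he1⟩ ⟨hc2, hal2, har2, he2⟩ hb
    have hbm : ∀ m : ℤ, ω₁ 1 (tVar p ^ m) = ω₂ 1 (tVar p ^ m) := fun m => congrFun hb m
    have main : ∀ ω : LaurentSeries (ZMod p) → LaurentSeries (ZMod p) → LaurentSeries (ZMod p),
        (∀ x x' y, ω (x + x') y = ω x y + ω x' y) →
        (∀ x y y', ω x (y + y') = ω x y + ω x y') →
        (∀ x y, ω (tVar p * x) (tVar p * y) = tVar p * ω x y) →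
        ∀ n m : ℤ, ∀ c d : ZMod p,
        ω (HahnSeries.single n c) (HahnSeries.single m d) =
          (c.val * d.val) • (tVar p ^ n * ω 1 (tVar p ^ (m - n))) := by
      intro ω hl hr he n m c d
      have key : ω (tVar p ^ n) (tVar p ^ m) = tVar p ^ n * ω 1 (tVar p ^ (m - n)) := by
        have h := Stmt13.omega_equi_int he n 1 (tVar p ^ (m - n))
        rw [mul_one, ← zpow_add₀ Stmt13.tVar_ne_zero, (show n + (m - n) = m by ring)] at h
        exact h
      conv_lhs => rw [← ZMod.natCast_rightInverse c, ← ZMod.natCast_rightInverse d]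
      rw [Stmt13.omega_nat_left hl, Stmt13.omega_nat_right hr, smul_smul,
        ← Stmt13.tpow n, ← Stmt13.tpow m] at *
      rw [key]
    have hsingle : ∀ n m : ℤ, ∀ c d : ZMod p,
        ω₁ (HahnSeries.single n c) (HahnSeries.single m d) =
        ω₂ (HahnSeries.single n c) (HahnSeries.single m d) := by
      intro n m c d
      rw [main ω₁ hal1 har1 he1, main ω₂ hal2 har2 he2, hbm (m - n)]
    have htr : ∀ x y : LaurentSeries (ZMod p), ∀ D : ℤ,
        ω₁ (Stmt13.truncF x D) (Stmt13.truncF y D) =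
          ω₂ (Stmt13.truncF x D) (Stmt13.truncF y D) := by
      intro x y D
      rw [Stmt13.truncF, Stmt13.truncF, Stmt13.omega_sum_left hal1, Stmt13.omega_sum_left hal2]
      refine Finset.sum_congr rfl fun n _ => ?_
      rw [Stmt13.omega_sum_right har1, Stmt13.omega_sum_right har2]
      refine Finset.sum_congr rfl fun m _ => ?_
      exact hsingle n m _ _
    funext x y
    rw [← sub_eq_zero]
    refine Stmt13.eq_zero_of_forall_labs_lt ?_
    intro ε hε
    obtain ⟨δ₁, hδ₁, h1⟩ := hc1 x y ε hε
    obtain ⟨δ₂, hδ₂, h2⟩ := hc2 x y ε hε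
    obtain ⟨N, hN⟩ := Stmt13.exists_pow_lt (p := p) (lt_min hδ₁ hδ₂)
    have hx : labs p (Stmt13.truncF x (N : ℤ) - x) ≤ (p:ℝ) ^ (-(N:ℤ)) := by
      rw [← neg_sub, Stmt13.labs_neg]
      exact Stmt13.labs_le_pow_iff.mpr (Stmt13.truncF_coeff x (N:ℤ))
    have hy : labs p (Stmt13.truncF y (N : ℤ) - y) ≤ (p:ℝ) ^ (-(N:ℤ)) := by
      rw [← neg_sub, Stmt13.labs_neg]
      exact Stmt13.labs_le_pow_iff.mpr (Stmt13.truncF_coeff y (N:ℤ))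
    have e1 := h1 (Stmt13.truncF x (N:ℤ)) (Stmt13.truncF y (N:ℤ))
      (lt_of_le_of_lt hx (lt_of_lt_of_le hN (min_le_left _ _)))
      (lt_of_le_of_lt hy (lt_of_lt_of_le hN (min_le_left _ _)))
    have e2 := h2 (Stmt13.truncF x (N:ℤ)) (Stmt13.truncF y (N:ℤ))
      (lt_of_le_of_lt hx (lt_of_lt_of_le hN (min_le_right _ _)))
      (lt_of_le_of_lt hy (lt_of_lt_of_le hN (min_le_right _ _)))
    have ht := htr x y (N:ℤ)
    have hdec : ω₁ x y - ω₂ x y =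
        (ω₂ (Stmt13.truncF x (N:ℤ)) (Stmt13.truncF y (N:ℤ)) - ω₂ x y) -
        (ω₁ (Stmt13.truncF x (N:ℤ)) (Stmt13.truncF y (N:ℤ)) - ω₁ x y) := by
      rw [ht]; ring
    rw [hdec, sub_eq_add_neg]
    refine lt_of_le_of_lt (Stmt13.labs_add_le _ _) ?_
    rw [Stmt13.labs_neg]
    exact max_lt e2 e1
  · -- surjectivity
    rintro a ⟨ht1, ht2⟩
    have hA : Stmt13.HA p a := by
      intro N
      obtain ⟨M, hM⟩ := Stmt13.tendsto_iff.mp ht1 ((p:ℝ) ^ (-(N - 1))) (zpow_pos Stmt13.p_pos _)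
      refine ⟨(M : ℤ), fun k hk j hj => ?_⟩
      have hk0 : k = ((k.toNat : ℕ) : ℤ) := by omega
      have hlab := hM k.toNat (by omega)
      rw [hk0]
      exact Stmt13.coeff_zero_of_labs_lt hlab j (by omega)
    have hB : Stmt13.HB p a := by
      intro N
      obtain ⟨M, hM⟩ := Stmt13.tendsto_iff.mp ht2 ((p:ℝ) ^ (-(N - 1))) (zpow_pos Stmt13.p_pos _)
      refine ⟨(M : ℤ), Int.natCast_nonneg M, fun k hk j hj => ?_⟩
      set m : ℕ := (-k).toNat with hmdef
      have hkm : k = -(m : ℤ) := by omega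
      have hlab := hM m (by omega)
      have hcoeff : (tVar p ^ (m : ℕ) * a (-(m : ℤ))).coeff (j + m) = (a (-(m : ℤ))).coeff j := by
        rw [Stmt13.tpow_nat, Stmt13.single_mul_coeff, add_sub_cancel_right]
      have h0 := Stmt13.coeff_zero_of_labs_lt hlab (j + m) (by omega)
      rw [hkm, ← hcoeff]
      exact h0
    refine ⟨fun x y => ⟨fun r => Stmt13.oc p a x y r, Stmt13.oc_pwo hA hB x y⟩,
      ⟨?_, ?_, ?_, ?_⟩, ?_⟩
    · -- continuity
      intro x y ε hε
      obtain ⟨N, hNε⟩ := Stmt13.exists_pow_lt (p := p) hε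
      obtain ⟨D1, hD1⟩ := Stmt13.oc_small_left hA hB (min y.order 0) (N : ℤ)
      obtain ⟨D2, hD2⟩ := Stmt13.oc_small_right hA hB x.order (N : ℤ)
      set E : ℤ := max 1 (max D1 D2) with hEdef
      refine ⟨(p:ℝ) ^ (-E), zpow_pos Stmt13.p_pos _, fun x' y' hx' hy' => ?_⟩
      have hxc : ∀ k, k < E → (x' - x).coeff k = 0 := fun k hk =>
        Stmt13.coeff_zero_of_labs_lt hx' k (by omega)
      have hyc : ∀ k, k < E → (y' - y).coeff k = 0 := fun k hk =>
        Stmt13.coeff_zero_of_labs_lt hy' k (by omega)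
      have hy'prop : ∀ m, y'.coeff m ≠ 0 → min y.order 0 ≤ m := by
        intro m hm
        by_contra hcon
        push_neg at hcon
        obtain ⟨hm1, hm2⟩ := lt_min_iff.mp hcon
        apply hm
        have hsplit : y'.coeff m = (y' - y).coeff m + y.coeff m := by
          rw [HahnSeries.coeff_sub]; ring
        rw [hsplit, HahnSeries.coeff_eq_zero_of_lt_order hm1, hyc m (by omega), add_zero]
      have hkey : ∀ j : ℤ, j < (N : ℤ) →
          Stmt13.oc p a x' y' j - Stmt13.oc p a x y j = 0 := by
        intro j hj
        have e1 : Stmt13.oc p a x' y' j =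
            Stmt13.oc p a (x' - x) y' j + Stmt13.oc p a x y' j := by
          have h := Stmt13.oc_add_left hA hB (x' - x) x y' j
          rwa [sub_add_cancel] at h
        have e2 : Stmt13.oc p a x y' j =
            Stmt13.oc p a x (y' - y) j + Stmt13.oc p a x y j := by
          have h := Stmt13.oc_add_right hA hB x (y' - y) y j
          rwa [sub_add_cancel] at h
        have z1 : Stmt13.oc p a (x' - x) y' j = 0 :=
          hD1 (x' - x) y' (fun k hk => hxc k (by omega)) hy'prop j hj
        have z2 : Stmt13.oc p a x (y' - y) j = 0 :=
          hD2 x (y' - y) (fun n hn => HahnSeries.order_le_of_coeff_ne_zero hn)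
            (fun k hk => hyc k (by omega)) j hj
        rw [e1, e2, z1, z2]; ring
      refine lt_of_le_of_lt (Stmt13.labs_le_pow_iff.mpr ?_) hNε
      intro j hj
      rw [HahnSeries.coeff_sub]
      exact hkey j hj
    · -- additivity left
      intro x x' y
      ext r
      rw [HahnSeries.coeff_add]
      exact Stmt13.oc_add_left hA hB x x' y r
    · -- additivity right
      intro x y y'
      ext r
      rw [HahnSeries.coeff_add]
      exact Stmt13.oc_add_right hA hB x y y' r
    · -- equivariance
      intro x y
      ext r
      show Stmt13.oc p a (tVar p * x) (tVar p * y) r =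
        (HahnSeries.single 1 1 * (⟨fun r => Stmt13.oc p a x y r,
          Stmt13.oc_pwo hA hB x y⟩ : LaurentSeries (ZMod p))).coeff r
      rw [Stmt13.single_mul_coeff]
      exact Stmt13.oc_equi x y r
    · -- b(ω) = a
      funext m
      ext r
      have h := Stmt13.oc_one_single (p := p) (a := a) m r
      rw [← Stmt13.tpow m] at h
      exact h
end

section
/- Let A = F_p((t)), s ∈ {0,1}^ℕ with s ≠ 0, and let η_s be the continuous equivariant biadditive 2-cocycle η_s(x,y) = ∑_n s_n t^n ω_{2n}(x,y). Equip A × A with the group law (a₁,b₁)(a₂,b₂) = (a₁ + a₂ + η_s(b₁,b₂), b₁ + b₂). Then the centre of this group A ×_{η_s} A equals A × {0}. If s = 0 the group is abelian. -/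
open scoped Classical

/-- Subsets of `ℤ` bounded below are partially well ordered. -/
theorem intIci_isPWO (c : ℤ) : (Set.Ici c).IsPWO := by
  have h : Set.IsPWO (Set.univ : Set ℕ) := by
    first
    | exact (Set.isWF_univ_iff.2 wellFounded_lt).isPWO
    | exact (Set.isWF_of_wellFoundedLT _).isPWO
    | exact (Set.IsWF.of_wellFoundedLT _).isPWO
    | exact Set.isPWO_of_wellQuasiOrderedLE _
  have himg := h.image_of_monotone (f := fun n : ℕ => c + (n : ℤ))
    (fun a b hab => by simp only; omega)
  refine himg.mono ?_
  intro j hj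
  refine ⟨(j - c).toNat, trivial, ?_⟩
  have : (0:ℤ) ≤ j - c := by simpa using hj
  simp [Int.toNat_of_nonneg this]

/-- `η_s(x,y) = ∑_{n ≥ 1} s_n t^n ω_{2n}(x,y)` on `F_p((t))`, where
`ω_k(x,y) = ∑_i x_i y_{i+k} t^i`; defined coefficientwise: the coefficient of `t^j` is
`∑_{n ≥ 1} s_n x_{j-n} y_{j+n}` (a finite sum). -/
noncomputable def etaMap (p : ℕ) (s : ℕ → Fin 2) (x y : LaurentSeries (ZMod p)) :
    LaurentSeries (ZMod p) where
  coeff := fun j => ∑ᶠ n : ℕ,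
    if 1 ≤ n then ((s n : ℕ) : ZMod p) * x.coeff (j - n) * y.coeff (j + n) else 0
  isPWO_support' := by
    refine (intIci_isPWO (x.order + 1)).mono ?_
    intro j hj
    rw [Function.mem_support] at hj
    have hex : ∃ n : ℕ, (if 1 ≤ n then ((s n : ℕ) : ZMod p) * x.coeff (j - n) * y.coeff (j + n) else 0) ≠ 0 := by
      by_contra h
      push_neg at h
      exact hj (finsum_eq_zero_of_forall_eq_zero h)
    obtain ⟨n, hn⟩ := hex
    have h1 : 1 ≤ n := by
      by_contra h
      rw [if_neg h] at hn
      exact hn rfl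
    rw [if_pos h1] at hn
    have hxne : x.coeff (j - n) ≠ 0 := by
      intro h0
      apply hn
      rw [h0, mul_zero, zero_mul]
    have horder : x.order ≤ j - n := HahnSeries.order_le_of_coeff_ne_zero hxne
    have hn' : (1 : ℤ) ≤ (n : ℤ) := by exact_mod_cast h1
    have : x.order + 1 ≤ j := by linarith
    exact this

/-- The group multiplication of the central extension `A ×_{η_s} A`,
`(a₁,b₁)(a₂,b₂) = (a₁ + a₂ + η_s(b₁,b₂), b₁ + b₂)`. -/
noncomputable def etaMul (p : ℕ) (s : ℕ → Fin 2)
    (z w : LaurentSeries (ZMod p) × LaurentSeries (ZMod p)) :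
    LaurentSeries (ZMod p) × LaurentSeries (ZMod p) :=
  (z.1 + w.1 + etaMap p s z.2 w.2, z.2 + w.2)

lemma etaMap_coeff (p : ℕ) (s : ℕ → Fin 2) (x y : LaurentSeries (ZMod p)) (j : ℤ) :
    (etaMap p s x y).coeff j = ∑ᶠ n : ℕ,
      if 1 ≤ n then ((s n : ℕ) : ZMod p) * x.coeff (j - n) * y.coeff (j + n) else 0 := rfl

lemma etaMap_zero_left (p : ℕ) (s : ℕ → Fin 2) (y : LaurentSeries (ZMod p)) :
    etaMap p s 0 y = 0 := by
  ext j
  rw [etaMap_coeff, HahnSeries.coeff_zero]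
  apply finsum_eq_zero_of_forall_eq_zero
  intro n
  split <;> simp

lemma etaMap_zero_right (p : ℕ) (s : ℕ → Fin 2) (y : LaurentSeries (ZMod p)) :
    etaMap p s y 0 = 0 := by
  ext j
  rw [etaMap_coeff, HahnSeries.coeff_zero]
  apply finsum_eq_zero_of_forall_eq_zero
  intro n
  split <;> simp

/-- For `s ∈ {0,1}^ℕ` with `s ≠ 0` (some `s_n ≠ 0`, `n ≥ 1`), the
centre of the group `A ×_{η_s} A` is exactly `A × {0}`; if `s = 0` the group is
abelian. -/
theorem stmt16 {p : ℕ} (hp : p.Prime) (s : ℕ → Fin 2) :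
    ((∃ n : ℕ, 1 ≤ n ∧ s n ≠ 0) →
      ∀ z : LaurentSeries (ZMod p) × LaurentSeries (ZMod p),
        ((∀ w, etaMul p s z w = etaMul p s w z) ↔ z.2 = 0)) ∧
    ((∀ n : ℕ, 1 ≤ n → s n = 0) →
      ∀ z w : LaurentSeries (ZMod p) × LaurentSeries (ZMod p),
        etaMul p s z w = etaMul p s w z) := by
  haveI : Fact (1 < p) := ⟨hp.one_lt⟩
  constructor
  · rintro ⟨N, hN1, hNs⟩ z
    constructor
    · intro hcomm
      by_contra hb
      set b := z.2 with hbdef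
      set m := b.order with hm
      set k : ℤ := m + 2 * N with hk
      set j : ℤ := m + N with hj
      set w : LaurentSeries (ZMod p) × LaurentSeries (ZMod p) :=
        (0, HahnSeries.single k 1) with hw
      have h := hcomm w
      have h1 : z.1 + w.1 + etaMap p s b w.2 = w.1 + z.1 + etaMap p s w.2 b :=
        congrArg Prod.fst h
      have h2 : etaMap p s b w.2 = etaMap p s w.2 b := by
        rw [add_comm z.1 w.1] at h1
        exact add_left_cancel h1
      have h3 := congrArg (fun x => HahnSeries.coeff x j) h2
      simp only [etaMap_coeff] at h3
      have hleft : (∑ᶠ n : ℕ,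
          if 1 ≤ n then ((s n : ℕ) : ZMod p) * b.coeff (j - n) * w.2.coeff (j + n) else 0)
          = ((s N : ℕ) : ZMod p) * b.coeff m := by
        rw [finsum_eq_single _ N]
        · rw [if_pos hN1]
          have hjN : j - (N : ℤ) = m := by rw [hj]; ring
          have hjk : j + (N : ℤ) = k := by rw [hj, hk]; ring
          rw [hjN, hjk]
          simp [hw, HahnSeries.coeff_single_same]
        · intro x hx
          split
          · have : w.2.coeff (j + x) = 0 := by
              rw [hw]
              simp only [HahnSeries.coeff_single]
              rw [if_neg]
              intro hc
              apply hx
              have : (x : ℤ) = N := by omega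
              exact_mod_cast this
            rw [this, mul_zero]
          · rfl
      have hright : (∑ᶠ n : ℕ,
          if 1 ≤ n then ((s n : ℕ) : ZMod p) * w.2.coeff (j - n) * b.coeff (j + n) else 0)
          = 0 := by
        apply finsum_eq_zero_of_forall_eq_zero
        intro n
        split
        · have hn1 : 1 ≤ n := by assumption
          have : w.2.coeff (j - n) = 0 := by
            rw [hw]
            simp only [HahnSeries.coeff_single]
            rw [if_neg]
            intro hc
            have hge : (1 : ℤ) ≤ (n : ℤ) := by exact_mod_cast hn1
            have hge' : (1 : ℤ) ≤ (N : ℤ) := by exact_mod_cast hN1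
            omega
          rw [this, mul_zero, zero_mul]
        · rfl
      rw [hleft, hright] at h3
      have hsN : ((s N : ℕ) : ZMod p) = 1 := by
        have h0 : (s N).val ≠ 0 := fun h => hNs (Fin.ext h)
        have h2' : (s N).val < 2 := (s N).isLt
        have : (s N : ℕ) = 1 := by omega
        rw [this, Nat.cast_one]
      rw [hsN, one_mul] at h3
      exact hb (HahnSeries.coeff_order_eq_zero.mp h3)
    · intro hz2 w
      unfold etaMul
      rw [hz2, etaMap_zero_left, etaMap_zero_right]
      ext <;> simp [add_comm]
  · intro hs z w
    have heq : ∀ x y : LaurentSeries (ZMod p), etaMap p s x y = 0 := by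
      intro x y
      ext j
      rw [etaMap_coeff, HahnSeries.coeff_zero]
      apply finsum_eq_zero_of_forall_eq_zero
      intro n
      split
      · have h1 : 1 ≤ n := by assumption
        rw [hs n h1]
        simp
      · rfl
    unfold etaMul
    rw [heq, heq]
    ext <;> simp [add_comm]
end
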